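/- For every compact interval [a,b] ⊂ (0,1) there exist d⋆ > 0 and C > 0 such that for every d ∈ (0, d⋆) and every μ ∈ [a,b] there exists a bounded sequence U : ℤ → ℝ satisfying the discrete Nagumo steady-state equation 0 = d(U_{n+1} + U_{n−1} − 2U_n) + U_n(U_n − μ)(1 − U_n) for all n ∈ ℤ, such that sup_{n∈ℤ} |U_n − V̄(μ)_n| ≤ C·d, U_n → 0 as n → −∞, and U_n → 1 as n → +∞. -/

import Mathlib

/-- The singular back solution `V̄(μ)`: `V̄(μ)_n = 0` for `n < 0`, `V̄(μ)_0 = μ`,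
`V̄(μ)_n = 1` for `n > 0`. -/
noncomputable def VbarFun (μ : ℝ) : ℤ → ℝ := fun n =>
  if n < 0 then 0 else if n = 0 then μ else 1


noncomputable def kapF (μ : ℝ) : ℤ → ℝ := fun n =>
  if n < 0 then -μ else if n = 0 then μ * (1 - μ) else μ - 1

noncomputable def ccF (μ : ℝ) : ℤ → ℝ := fun n =>
  if n < 0 then 1 + μ else if n = 0 then 1 - μ else μ - 1

def gw : ℤ → ℕ := fun n => n.natAbs - 1

lemma nag_ident (μ : ℝ) (n : ℤ) (z : ℝ) :
    z * (z - μ) * (1 - z) - kapF μ n * (z - VbarFun μ n)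
      = (z - VbarFun μ n) ^ 2 * (ccF μ n - z) := by
  unfold kapF ccF VbarFun
  split_ifs <;> ring

lemma adiff_ident (r c x y : ℝ) :
    (x - r) ^ 2 * (c - x) - (y - r) ^ 2 * (c - y)
      = (x - y) * ((c - r) * ((x - r) + (y - r))
          - ((x - r) ^ 2 + (x - r) * (y - r) + (y - r) ^ 2)) := by
  ring

lemma abound (r c z : ℝ) (hc : |c - r| ≤ 2) (hz : |z - r| ≤ 1) :
    |(z - r) ^ 2 * (c - z)| ≤ 3 * (z - r) ^ 2 := by
  have h1 : |c - z| ≤ 3 := by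
    have he : c - z = (c - r) - (z - r) := by ring
    rw [he]
    calc |(c - r) - (z - r)| ≤ |c - r| + |z - r| := abs_sub _ _
      _ ≤ 2 + 1 := add_le_add hc hz
      _ = 3 := by norm_num
  rw [abs_mul, abs_pow, sq_abs]
  calc (z - r) ^ 2 * |c - z| ≤ (z - r) ^ 2 * 3 := by
        exact mul_le_mul_of_nonneg_left h1 (sq_nonneg _)
    _ = 3 * (z - r) ^ 2 := by ring

lemma adiff_bound (r c x y ρ : ℝ) (hc : |c - r| ≤ 2) (hρ : ρ ≤ 1)
    (hx : |x - r| ≤ ρ) (hy : |y - r| ≤ ρ) :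
    |(x - r) ^ 2 * (c - x) - (y - r) ^ 2 * (c - y)| ≤ 7 * ρ * |x - y| := by
  have hρ0 : 0 ≤ ρ := le_trans (abs_nonneg _) hx
  rw [adiff_ident, abs_mul]
  have hQ : |(c - r) * ((x - r) + (y - r))
          - ((x - r) ^ 2 + (x - r) * (y - r) + (y - r) ^ 2)| ≤ 7 * ρ := by
    set u := x - r
    set v := y - r
    calc |(c - r) * (u + v) - (u ^ 2 + u * v + v ^ 2)|
        ≤ |(c - r) * (u + v)| + |u ^ 2 + u * v + v ^ 2| := abs_sub _ _
      _ ≤ 2 * (2 * ρ) + 3 * ρ ^ 2 := by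
          gcongr ?_ + ?_
          · rw [abs_mul]
            have : |u + v| ≤ 2 * ρ := by
              calc |u + v| ≤ |u| + |v| := abs_add_le _ _
                _ ≤ ρ + ρ := add_le_add hx hy
                _ = 2 * ρ := by ring
            exact mul_le_mul hc this (abs_nonneg _) (by norm_num)
          · calc |u ^ 2 + u * v + v ^ 2| ≤ |u ^ 2| + |u * v| + |v ^ 2| := by
                  exact (abs_add_le _ _).trans (add_le_add_left (abs_add_le _ _) _)
              _ ≤ ρ ^ 2 + ρ ^ 2 + ρ ^ 2 := by
                  gcongr ?_ + ?_ + ?_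
                  · rw [abs_pow]; exact pow_le_pow_left₀ (abs_nonneg _) hx 2
                  · rw [abs_mul]
                    calc |u| * |v| ≤ ρ * ρ := mul_le_mul hx hy (abs_nonneg _) hρ0
                      _ = ρ ^ 2 := by ring
                  · rw [abs_pow]; exact pow_le_pow_left₀ (abs_nonneg _) hy 2
              _ = 3 * ρ ^ 2 := by ring
      _ ≤ 4 * ρ + 3 * ρ := by
          nlinarith [sq_nonneg ρ]
      _ = 7 * ρ := by ring
  calc |x - y| * |_| ≤ |x - y| * (7 * ρ) := mul_le_mul_of_nonneg_left hQ (abs_nonneg _)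
    _ = 7 * ρ * |x - y| := by ring

lemma pow_half_step (i j : ℕ) (h : i ≤ j + 1) : (2⁻¹ : ℝ) ^ j ≤ 2 * (2⁻¹ : ℝ) ^ i := by
  rcases Nat.eq_zero_or_pos i with hi | hi
  · subst hi
    simp only [pow_zero, mul_one]
    calc (2⁻¹ : ℝ) ^ j ≤ 1 := by
          apply pow_le_one₀ <;> norm_num
      _ ≤ 2 := by norm_num
  · obtain ⟨k, rfl⟩ := Nat.exists_eq_succ_of_ne_zero (Nat.pos_iff_ne_zero.mp hi)
    have hj : k ≤ j := by omega
    calc (2⁻¹ : ℝ) ^ j ≤ (2⁻¹ : ℝ) ^ k := by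
          apply pow_le_pow_of_le_one (by norm_num) (by norm_num) hj
      _ = 2 * (2⁻¹ : ℝ) ^ (k + 1) := by rw [pow_succ]; ring

section facts
variable (μ m : ℝ)

lemma kap_lb (hm : 0 < m) (hmμ : m ≤ μ) (hm1 : m ≤ 1 - μ) (hmm : m ≤ μ * (1 - μ)) :
    ∀ n : ℤ, m ≤ |kapF μ n| := by
  intro n
  unfold kapF
  have h0 : 0 < μ := lt_of_lt_of_le hm hmμ
  have h1 : μ < 1 := by linarith
  split_ifs
  · rw [abs_neg, abs_of_pos h0]; exact hmμ
  · rw [abs_of_pos (by nlinarith)]; exact hmm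
  · rw [abs_of_neg (by linarith)]; linarith

lemma cc_bound (h0 : 0 ≤ μ) (h1 : μ ≤ 1) : ∀ n : ℤ, |ccF μ n - VbarFun μ n| ≤ 2 := by
  intro n
  unfold ccF VbarFun
  split_ifs <;> rw [abs_le] <;> constructor <;> linarith

lemma V_bound (h0 : 0 ≤ μ) (h1 : μ ≤ 1) : ∀ n : ℤ, |VbarFun μ n| ≤ 1 := by
  intro n
  unfold VbarFun
  split_ifs <;> rw [abs_le] <;> constructor <;> linarith

lemma LV_cases (h0 : 0 ≤ μ) (h1 : μ ≤ 1) : ∀ n : ℤ,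
    (VbarFun μ (n + 1) + VbarFun μ (n - 1) - 2 * VbarFun μ n = 0) ∨
    (gw n = 0 ∧ |VbarFun μ (n + 1) + VbarFun μ (n - 1) - 2 * VbarFun μ n| ≤ 2) := by
  intro n
  unfold VbarFun gw
  by_cases hA : n ≤ -2
  · left
    rw [if_pos (by omega : n + 1 < 0), if_pos (by omega : n - 1 < 0), if_pos (by omega : n < 0)]
    ring
  by_cases hB : n = -1
  · right
    subst hB
    refine ⟨by omega, ?_⟩
    norm_num
    rw [abs_le]; constructor <;> linarith
  by_cases hC : n = 0
  · right
    subst hC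
    refine ⟨by omega, ?_⟩
    norm_num
    rw [abs_le]; constructor <;> linarith
  by_cases hD : n = 1
  · right
    subst hD
    refine ⟨by omega, ?_⟩
    norm_num
    rw [abs_le]; constructor <;> linarith
  · left
    have h2 : 2 ≤ n := by omega
    rw [if_neg (by omega : ¬ n + 1 < 0), if_neg (by omega : ¬ n + 1 = 0),
      if_neg (by omega : ¬ n - 1 < 0), if_neg (by omega : ¬ n - 1 = 0),
      if_neg (by omega : ¬ n < 0), if_neg (by omega : ¬ n = 0)]
    ring

lemma gw_step (n : ℤ) : gw n ≤ gw (n + 1) + 1 ∧ gw n ≤ gw (n - 1) + 1 := by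
  unfold gw; omega
end facts

noncomputable def Tmap (μ d : ℝ) (U : ℤ → ℝ) : ℤ → ℝ := fun n =>
  U n - (d * (U (n + 1) + U (n - 1) - 2 * U n) + U n * (U n - μ) * (1 - U n)) / kapF μ n

lemma Tmap_sub (μ d : ℝ) (U : ℤ → ℝ) (n : ℤ) (hκ : kapF μ n ≠ 0) :
    (Tmap μ d U n - VbarFun μ n) * kapF μ n
      = -(((U n - VbarFun μ n) ^ 2 * (ccF μ n - U n))
          + d * (U (n + 1) + U (n - 1) - 2 * U n)) := by
  have h := nag_ident μ n (U n)
  unfold Tmap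
  field_simp
  linear_combination -h

lemma Tmap_diff (μ d : ℝ) (U W : ℤ → ℝ) (n : ℤ) (hκ : kapF μ n ≠ 0) :
    (Tmap μ d U n - Tmap μ d W n) * kapF μ n
      = -((((U n - VbarFun μ n) ^ 2 * (ccF μ n - U n))
            - ((W n - VbarFun μ n) ^ 2 * (ccF μ n - W n)))
          + d * ((U (n + 1) - W (n + 1)) + (U (n - 1) - W (n - 1)) - 2 * (U n - W n))) := by
  have h1 := nag_ident μ n (U n)
  have h2 := nag_ident μ n (W n)
  unfold Tmap
  field_simp
  linear_combination h2 - h1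

section core
variable {μ d m : ℝ}

structure Hyp (μ d m : ℝ) : Prop where
  hm : 0 < m
  hmμ : m ≤ μ
  hm1 : m ≤ 1 - μ
  hmm : m ≤ μ * (1 - μ)
  hd0 : 0 < d
  hd : d < m ^ 2 / 300

namespace Hyp
variable (H : Hyp μ d m)
include H

lemma hμ0 : 0 < μ := lt_of_lt_of_le H.hm H.hmμ
lemma hμ1 : μ < 1 := by linarith [H.hm1, H.hm]
lemma hm_le : m ≤ 1/4 := by nlinarith [H.hmm, sq_nonneg (2*μ - 1)]
lemma hρ0 : 0 < 16 * d / m := div_pos (by linarith [H.hd0]) H.hm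
lemma hρm : 16 * d / m ≤ m / 18 := by
  rw [div_le_div_iff₀ H.hm (by norm_num : (0:ℝ) < 18)]
  nlinarith [H.hd, H.hm, H.hd0]
lemma hρ1 : 16 * d / m ≤ 1 := le_trans H.hρm (by linarith [H.hm_le])
lemma hmρ : m * (16 * d / m) = 16 * d := by
  rw [mul_comm, div_mul_eq_mul_div, mul_div_assoc, div_self H.hm.ne', mul_one]

end Hyp

lemma invariance (H : Hyp μ d m) (U : ℤ → ℝ)
    (hU : ∀ k, |U k - VbarFun μ k| ≤ (16 * d / m) * (2⁻¹ : ℝ) ^ gw k) :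
    ∀ n, |Tmap μ d U n - VbarFun μ n| ≤ (16 * d / m) * (2⁻¹ : ℝ) ^ gw n := by
  intro n
  set ρ : ℝ := 16 * d / m with hρdef
  set q : ℝ := (2⁻¹ : ℝ)
  have hq0 : (0:ℝ) ≤ q := by norm_num
  have hq1 : ∀ k : ℕ, q ^ k ≤ 1 := fun k => pow_le_one₀ hq0 (by norm_num)
  have hqk0 : ∀ k : ℕ, (0:ℝ) ≤ q ^ k := fun k => pow_nonneg hq0 k
  have hρ0 : 0 < ρ := H.hρ0
  have hρ1 : ρ ≤ 1 := H.hρ1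
  have hρm : ρ ≤ m / 18 := H.hρm
  have hκ := kap_lb μ m H.hm H.hmμ H.hm1 H.hmm n
  have hκne : kapF μ n ≠ 0 := by
    intro h; rw [h, abs_zero] at hκ; linarith [H.hm]
  have hρf : ∀ k, ρ * q ^ gw k ≤ ρ := fun k => by
    calc ρ * q ^ gw k ≤ ρ * 1 := mul_le_mul_of_nonneg_left (hq1 _) hρ0.le
      _ = ρ := mul_one ρ
  have hs := hU n
  have hs1 : |U n - VbarFun μ n| ≤ 1 := le_trans hs (le_trans (hρf n) hρ1)
  -- bound on A
  have hA : |(U n - VbarFun μ n) ^ 2 * (ccF μ n - U n)| ≤ 3 * (ρ * (ρ * q ^ gw n)) := by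
    calc |(U n - VbarFun μ n) ^ 2 * (ccF μ n - U n)| ≤ 3 * (U n - VbarFun μ n) ^ 2 :=
          abound _ _ _ (cc_bound μ H.hμ0.le H.hμ1.le n) hs1
      _ ≤ 3 * (ρ * (ρ * q ^ gw n)) := by
          have h2 : (U n - VbarFun μ n) ^ 2 ≤ ρ * (ρ * q ^ gw n) := by
            have := abs_nonneg (U n - VbarFun μ n)
            nlinarith [hs, le_trans hs (hρf n), sq_abs (U n - VbarFun μ n)]
          linarith
  -- bound on Laplacian
  have hnb : ∀ j : ℤ, gw n ≤ gw j + 1 → |U j - VbarFun μ j| ≤ 2 * (ρ * q ^ gw n) := by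
    intro j hj
    calc |U j - VbarFun μ j| ≤ ρ * q ^ gw j := hU j
      _ ≤ ρ * (2 * q ^ gw n) := mul_le_mul_of_nonneg_left (pow_half_step _ _ hj) hρ0.le
      _ = 2 * (ρ * q ^ gw n) := by ring
  have hLp := hnb (n + 1) (gw_step n).1
  have hLm := hnb (n - 1) (gw_step n).2
  have key := Tmap_sub μ d U n hκne
  -- main estimate
  have hmain : |((U n - VbarFun μ n) ^ 2 * (ccF μ n - U n))
      + d * (U (n+1) + U (n-1) - 2 * U n)| ≤ m * (ρ * q ^ gw n) := by
    have hLL : U (n+1) + U (n-1) - 2 * U n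
        = (U (n+1) - VbarFun μ (n+1)) + (U (n-1) - VbarFun μ (n-1))
          - 2 * (U n - VbarFun μ n)
          + (VbarFun μ (n+1) + VbarFun μ (n-1) - 2 * VbarFun μ n) := by ring
    rcases LV_cases μ H.hμ0.le H.hμ1.le n with hLV | ⟨hgw, hLV⟩
    · -- LV = 0
      have hLbd : |U (n+1) + U (n-1) - 2 * U n| ≤ 6 * (ρ * q ^ gw n) := by
        rw [hLL, hLV, add_zero]
        calc |(U (n+1) - VbarFun μ (n+1)) + (U (n-1) - VbarFun μ (n-1))
              - 2 * (U n - VbarFun μ n)|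
            ≤ |U (n+1) - VbarFun μ (n+1)| + |U (n-1) - VbarFun μ (n-1)|
              + 2 * |U n - VbarFun μ n| := by
              calc _ ≤ |(U (n+1) - VbarFun μ (n+1)) + (U (n-1) - VbarFun μ (n-1))|
                    + |2 * (U n - VbarFun μ n)| := abs_sub _ _
                _ ≤ _ := by
                    rw [abs_mul, abs_two]
                    exact add_le_add_left (abs_add_le _ _) _
          _ ≤ 2 * (ρ * q ^ gw n) + 2 * (ρ * q ^ gw n) + 2 * (ρ * q ^ gw n) := by
              linarith [hLp, hLm, hU n]
          _ = 6 * (ρ * q ^ gw n) := by ring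
      calc |((U n - VbarFun μ n) ^ 2 * (ccF μ n - U n))
            + d * (U (n+1) + U (n-1) - 2 * U n)|
          ≤ 3 * (ρ * (ρ * q ^ gw n)) + d * (6 * (ρ * q ^ gw n)) := by
            refine le_trans (abs_add_le _ _) (add_le_add hA ?_)
            rw [abs_mul, abs_of_pos H.hd0]
            exact mul_le_mul_of_nonneg_left hLbd H.hd0.le
        _ ≤ m * (ρ * q ^ gw n) := by
            have h1 : 3 * ρ + 6 * d ≤ m := by
              have h2 : 6 * d ≤ m / 2 := by nlinarith [H.hd, H.hm, H.hm_le]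
              have h3 : 3 * ρ ≤ m / 6 := by linarith
              linarith
            nlinarith [mul_nonneg hρ0.le (hqk0 (gw n)), hqk0 (gw n), hρ0]
    · -- |n| ≤ 1 case
      rw [hgw, pow_zero, mul_one]
      rw [hgw, pow_zero, mul_one] at hA
      have hLbd : |U (n+1) + U (n-1) - 2 * U n| ≤ 6 * ρ + 2 := by
        rw [hLL]
        calc _ ≤ |(U (n+1) - VbarFun μ (n+1)) + (U (n-1) - VbarFun μ (n-1))
              - 2 * (U n - VbarFun μ n)|
              + |VbarFun μ (n+1) + VbarFun μ (n-1) - 2 * VbarFun μ n| := abs_add_le _ _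
          _ ≤ (2 * ρ + 2 * ρ + 2 * ρ) + 2 := by
              refine add_le_add ?_ hLV
              calc |(U (n+1) - VbarFun μ (n+1)) + (U (n-1) - VbarFun μ (n-1))
                    - 2 * (U n - VbarFun μ n)|
                    ≤ |U (n+1) - VbarFun μ (n+1)| + |U (n-1) - VbarFun μ (n-1)|
                      + 2 * |U n - VbarFun μ n| := by
                      calc _ ≤ |(U (n+1) - VbarFun μ (n+1)) + (U (n-1) - VbarFun μ (n-1))|
                            + |2 * (U n - VbarFun μ n)| := abs_sub _ _
                        _ ≤ _ := by
                            rw [abs_mul, abs_two]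
                            exact add_le_add_left (abs_add_le _ _) _
                  _ ≤ 2 * ρ + 2 * ρ + 2 * ρ := by
                      have e1 : |U (n+1) - VbarFun μ (n+1)| ≤ 2 * ρ := by
                        rw [hgw, pow_zero, mul_one] at hLp; exact hLp
                      have e2 : |U (n-1) - VbarFun μ (n-1)| ≤ 2 * ρ := by
                        rw [hgw, pow_zero, mul_one] at hLm; exact hLm
                      have e3 : |U n - VbarFun μ n| ≤ ρ := le_trans (hU n) (hρf n)
                      linarith
          _ = 6 * ρ + 2 := by ring
      calc |((U n - VbarFun μ n) ^ 2 * (ccF μ n - U n))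
            + d * (U (n+1) + U (n-1) - 2 * U n)|
          ≤ 3 * (ρ * ρ) + d * (6 * ρ + 2) := by
            refine le_trans (abs_add_le _ _) (add_le_add hA ?_)
            rw [abs_mul, abs_of_pos H.hd0]
            exact mul_le_mul_of_nonneg_left hLbd H.hd0.le
        _ ≤ m * ρ := by
            have hmr : m * ρ = 16 * d := H.hmρ
            nlinarith [hρm, H.hd0, hρ1, H.hm]
  -- conclude
  have habs : |Tmap μ d U n - VbarFun μ n| * m ≤ m * (ρ * q ^ gw n) := by
    calc |Tmap μ d U n - VbarFun μ n| * m
        ≤ |Tmap μ d U n - VbarFun μ n| * |kapF μ n| :=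
          mul_le_mul_of_nonneg_left hκ (abs_nonneg _)
      _ = |(Tmap μ d U n - VbarFun μ n) * kapF μ n| := (abs_mul _ _).symm
      _ = |((U n - VbarFun μ n) ^ 2 * (ccF μ n - U n))
          + d * (U (n+1) + U (n-1) - 2 * U n)| := by rw [key, abs_neg]
      _ ≤ m * (ρ * q ^ gw n) := hmain
  have := (mul_le_mul_iff_left₀ H.hm).mp (by linarith [habs] : |Tmap μ d U n - VbarFun μ n| * m ≤ (ρ * q ^ gw n) * m)
  exact this

lemma contraction (H : Hyp μ d m) (U W : ℤ → ℝ)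
    (hU : ∀ k, |U k - VbarFun μ k| ≤ 16 * d / m)
    (hW : ∀ k, |W k - VbarFun μ k| ≤ 16 * d / m)
    (D : ℝ) (hD0 : 0 ≤ D) (hUW : ∀ k, |U k - W k| ≤ D) :
    ∀ n, |Tmap μ d U n - Tmap μ d W n| ≤ 2⁻¹ * D := by
  intro n
  set ρ : ℝ := 16 * d / m with hρdef
  have hρ0 : 0 < ρ := H.hρ0
  have hρ1 : ρ ≤ 1 := H.hρ1
  have hρm : ρ ≤ m / 18 := H.hρm
  have hκ := kap_lb μ m H.hm H.hmμ H.hm1 H.hmm n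
  have hκne : kapF μ n ≠ 0 := by
    intro h; rw [h, abs_zero] at hκ; linarith [H.hm]
  have key := Tmap_diff μ d U W n hκne
  have hAd : |((U n - VbarFun μ n) ^ 2 * (ccF μ n - U n))
      - ((W n - VbarFun μ n) ^ 2 * (ccF μ n - W n))| ≤ 7 * ρ * D := by
    calc |((U n - VbarFun μ n) ^ 2 * (ccF μ n - U n))
        - ((W n - VbarFun μ n) ^ 2 * (ccF μ n - W n))|
        ≤ 7 * ρ * |U n - W n| :=
          adiff_bound _ _ _ _ ρ (cc_bound μ H.hμ0.le H.hμ1.le n) hρ1 (hU n) (hW n)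
      _ ≤ 7 * ρ * D := by
          exact mul_le_mul_of_nonneg_left (hUW n) (by positivity)
  have hLd : |(U (n+1) - W (n+1)) + (U (n-1) - W (n-1)) - 2 * (U n - W n)| ≤ 4 * D := by
    calc |(U (n+1) - W (n+1)) + (U (n-1) - W (n-1)) - 2 * (U n - W n)|
        ≤ |(U (n+1) - W (n+1)) + (U (n-1) - W (n-1))| + |2 * (U n - W n)| := abs_sub _ _
      _ ≤ (|U (n+1) - W (n+1)| + |U (n-1) - W (n-1)|) + 2 * |U n - W n| := by
          rw [abs_mul, abs_two]
          exact add_le_add_left (abs_add_le _ _) _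
      _ ≤ (D + D) + 2 * D := by
          have := hUW (n+1); have := hUW (n-1); have := hUW n
          linarith
      _ = 4 * D := by ring
  have hmain : |(((U n - VbarFun μ n) ^ 2 * (ccF μ n - U n))
        - ((W n - VbarFun μ n) ^ 2 * (ccF μ n - W n)))
      + d * ((U (n+1) - W (n+1)) + (U (n-1) - W (n-1)) - 2 * (U n - W n))|
      ≤ m * (2⁻¹ * D) := by
    calc _ ≤ 7 * ρ * D + d * (4 * D) := by
          refine le_trans (abs_add_le _ _) (add_le_add hAd ?_)
          rw [abs_mul, abs_of_pos H.hd0]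
          exact mul_le_mul_of_nonneg_left hLd H.hd0.le
      _ ≤ m * (2⁻¹ * D) := by
          have h1 : 7 * ρ ≤ 7 * (m / 18) := by linarith
          have h2 : 4 * d ≤ m / 75 := by nlinarith [H.hd, H.hm, H.hm_le]
          nlinarith [hD0, H.hm]
  have habs : |Tmap μ d U n - Tmap μ d W n| * m ≤ m * (2⁻¹ * D) := by
    calc |Tmap μ d U n - Tmap μ d W n| * m
        ≤ |Tmap μ d U n - Tmap μ d W n| * |kapF μ n| :=
          mul_le_mul_of_nonneg_left hκ (abs_nonneg _)
      _ = |(Tmap μ d U n - Tmap μ d W n) * kapF μ n| := (abs_mul _ _).symm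
      _ ≤ m * (2⁻¹ * D) := by rw [key, abs_neg]; exact hmain
  exact (mul_le_mul_iff_left₀ H.hm).mp (by linarith [habs])

open Filter BoundedContinuousFunction in
lemma exists_solution (H : Hyp μ d m) :
    ∃ U : ℤ → ℝ, (∃ B : ℝ, ∀ n : ℤ, |U n| ≤ B) ∧
      (∀ n : ℤ, 0 = d * (U (n + 1) + U (n - 1) - 2 * U n)
          + U n * (U n - μ) * (1 - U n)) ∧
      (∀ n : ℤ, |U n - VbarFun μ n| ≤ (16 / m) * d) ∧
      Tendsto U atBot (nhds 0) ∧ Tendsto U atTop (nhds 1) := by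
  classical
  set ρ : ℝ := 16 * d / m with hρdef
  have hρ0 : 0 < ρ := H.hρ0
  have hρ1 : ρ ≤ 1 := H.hρ1
  set ρf : ℤ → ℝ := fun n => ρ * (2⁻¹ : ℝ) ^ gw n with hρfdef
  have hρf0 : ∀ n, 0 ≤ ρf n := fun n => by positivity
  have hρfρ : ∀ n, ρf n ≤ ρ := fun n => by
    have : (2⁻¹ : ℝ) ^ gw n ≤ 1 := pow_le_one₀ (by norm_num) (by norm_num)
    calc ρf n ≤ ρ * 1 := mul_le_mul_of_nonneg_left this hρ0.le
      _ = ρ := mul_one ρ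
  have hVb : ∀ n : ℤ, ‖VbarFun μ n‖ ≤ 1 := fun n => by
    rw [Real.norm_eq_abs]; exact V_bound μ H.hμ0.le H.hμ1.le n
  -- the closed invariant set
  set S : Set (ℤ →ᵇ ℝ) := {F | ∀ n : ℤ, |F n - VbarFun μ n| ≤ ρf n} with hSdef
  have hScl : IsClosed S := by
    have : S = ⋂ n : ℤ, {F : ℤ →ᵇ ℝ | |F n - VbarFun μ n| ≤ ρf n} := by
      ext F; simp [hSdef, Set.mem_iInter]
    rw [this]
    refine isClosed_iInter fun n => isClosed_le ?_ continuous_const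
    exact ((continuous_eval_const n).sub continuous_const).abs
  set Vb : ℤ →ᵇ ℝ :=
    ofNormedAddCommGroup (VbarFun μ) continuous_of_discreteTopology 1 hVb with hVbdef
  have hVS : Vb ∈ S := by
    intro n
    simp only [hVbdef, coe_ofNormedAddCommGroup, sub_self, abs_zero]
    exact hρf0 n
  -- bound on T images
  have hTbd : ∀ F : S, ∀ n : ℤ, ‖Tmap μ d (F : ℤ →ᵇ ℝ) n‖ ≤ 2 := by
    intro F n
    have h1 := invariance H (F : ℤ →ᵇ ℝ) F.2 n
    have h2 := V_bound μ H.hμ0.le H.hμ1.le n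
    rw [Real.norm_eq_abs]
    calc |Tmap μ d (F : ℤ →ᵇ ℝ) n|
        ≤ |Tmap μ d (F : ℤ →ᵇ ℝ) n - VbarFun μ n| + |VbarFun μ n| := by
          have := abs_add_le (Tmap μ d (F : ℤ →ᵇ ℝ) n - VbarFun μ n) (VbarFun μ n)
          simpa using this
      _ ≤ ρ * (2⁻¹ : ℝ) ^ gw n + 1 := add_le_add h1 h2
      _ ≤ 1 + 1 := by
          have := hρfρ n
          simp only [hρfdef] at this
          exact add_le_add_left (le_trans this hρ1) 1
      _ = 2 := by norm_num
  set TS : S → S := fun F =>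
    ⟨ofNormedAddCommGroup (Tmap μ d (F : ℤ →ᵇ ℝ)) continuous_of_discreteTopology 2 (hTbd F),
     fun n => by
       simp only [coe_ofNormedAddCommGroup]
       exact invariance H (F : ℤ →ᵇ ℝ) F.2 n⟩ with hTSdef
  haveI : Nonempty S := ⟨⟨Vb, hVS⟩⟩
  haveI : CompleteSpace S := hScl.completeSpace_coe
  have hcontr : ContractingWith (2⁻¹ : NNReal) TS := by
    constructor
    · rw [← NNReal.coe_lt_coe]; norm_num
    · refine LipschitzWith.of_dist_le_mul fun F G => ?_
      rw [Subtype.dist_eq, Subtype.dist_eq]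
      have hcast : (((2⁻¹ : NNReal)) : ℝ) = (2⁻¹ : ℝ) := by norm_num
      rw [hcast]
      refine (BoundedContinuousFunction.dist_le (by positivity)).mpr fun n => ?_
      rw [Real.dist_eq]
      simp only [hTSdef, coe_ofNormedAddCommGroup]
      refine contraction H (F : ℤ →ᵇ ℝ) (G : ℤ →ᵇ ℝ)
        (fun k => le_trans (F.2 k) (hρfρ k)) (fun k => le_trans (G.2 k) (hρfρ k))
        (dist (F : ℤ →ᵇ ℝ) (G : ℤ →ᵇ ℝ)) dist_nonneg (fun k => ?_) n
      rw [← Real.dist_eq]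
      exact dist_coe_le_dist k
  set P : S := hcontr.fixedPoint TS with hPdef
  have hfix : TS P = P := hcontr.fixedPoint_isFixedPt
  set U : ℤ → ℝ := fun n => (P : ℤ →ᵇ ℝ) n with hUdef
  have heq : ∀ n, Tmap μ d U n = U n := by
    intro n
    have h1 : ((TS P : S) : ℤ →ᵇ ℝ) n = (P : ℤ →ᵇ ℝ) n := by rw [hfix]
    simpa [hTSdef, coe_ofNormedAddCommGroup] using h1
  have hUV : ∀ n, |U n - VbarFun μ n| ≤ ρf n := P.2
  refine ⟨U, ⟨2, fun n => ?_⟩, fun n => ?_, fun n => ?_, ?_, ?_⟩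
  · -- boundedness
    have h1 := hUV n
    have h2 := V_bound μ H.hμ0.le H.hμ1.le n
    have h3 : ρf n ≤ 1 := le_trans (hρfρ n) hρ1
    have := abs_add_le (U n - VbarFun μ n) (VbarFun μ n)
    simp only [sub_add_cancel] at this
    linarith
  · -- the equation
    have h := heq n
    have hκ := kap_lb μ m H.hm H.hmμ H.hm1 H.hmm n
    have hκne : kapF μ n ≠ 0 := by
      intro hz; rw [hz, abs_zero] at hκ; linarith [H.hm]
    unfold Tmap at h
    have h2 : (d * (U (n + 1) + U (n - 1) - 2 * U n)
        + U n * (U n - μ) * (1 - U n)) / kapF μ n = 0 := by linarith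
    rcases div_eq_zero_iff.mp h2 with h3 | h3
    · linarith [h3]
    · exact absurd h3 hκne
  · -- closeness
    have : (16 / m) * d = ρ := by rw [hρdef]; ring
    rw [this]
    exact le_trans (hUV n) (hρfρ n)
  · -- limit at -∞
    have hgw : Tendsto gw atBot atTop := by
      refine tendsto_atTop.mpr fun N => eventually_atBot.mpr ⟨-(N : ℤ) - 1, fun n hn => ?_⟩
      unfold gw; omega
    have hq : Tendsto (fun k : ℕ => (2⁻¹ : ℝ) ^ k) atTop (nhds 0) :=
      tendsto_pow_atTop_nhds_zero_of_lt_one (by norm_num) (by norm_num)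
    have hρft : Tendsto ρf atBot (nhds 0) := by
      rw [hρfdef]
      have h := (hq.comp hgw).const_mul ρ
      simpa [Function.comp] using h
    refine squeeze_zero_norm' ?_ hρft
    refine eventually_atBot.mpr ⟨-1, fun n hn => ?_⟩
    have hV : VbarFun μ n = 0 := if_pos (by omega)
    have := hUV n
    rw [hV, sub_zero] at this
    rwa [Real.norm_eq_abs]
  · -- limit at +∞
    have hgw : Tendsto gw atTop atTop := by
      refine tendsto_atTop.mpr fun N => eventually_atTop.mpr ⟨(N : ℤ) + 1, fun n hn => ?_⟩
      unfold gw; omega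
    have hq : Tendsto (fun k : ℕ => (2⁻¹ : ℝ) ^ k) atTop (nhds 0) :=
      tendsto_pow_atTop_nhds_zero_of_lt_one (by norm_num) (by norm_num)
    have hρft : Tendsto ρf atTop (nhds 0) := by
      rw [hρfdef]
      have h := (hq.comp hgw).const_mul ρ
      simpa [Function.comp] using h
    have hU1 : Tendsto (fun n => U n - 1) atTop (nhds 0) := by
      refine squeeze_zero_norm' ?_ hρft
      refine eventually_atTop.mpr ⟨1, fun n hn => ?_⟩
      have hV : VbarFun μ n = 1 := by
        unfold VbarFun
        rw [if_neg (by omega), if_neg (by omega)]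
      have := hUV n
      rw [hV] at this
      rwa [Real.norm_eq_abs]
    have h2 : Tendsto (fun n => (U n - 1) + 1) atTop (nhds (0 + 1)) :=
      hU1.add tendsto_const_nhds
    simpa using h2

end core

/-- For every compact interval `[a,b] ⊂ (0,1)` there are
`d⋆ > 0` and `C > 0` such that for every `d ∈ (0,d⋆)` and `μ ∈ [a,b]` there is a
bounded solution `U` of the discrete Nagumo steady-state equation with
`sup_n |U_n − V̄(μ)_n| ≤ C·d`, `U_n → 0` as `n → −∞` and `U_n → 1` as `n → +∞`. -/
theorem statement10 (a b : ℝ) (ha : 0 < a) (hab : a ≤ b) (hb : b < 1) :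
    ∃ dstar > (0 : ℝ), ∃ C > (0 : ℝ),
      ∀ d ∈ Set.Ioo (0 : ℝ) dstar, ∀ μ ∈ Set.Icc a b,
        ∃ U : ℤ → ℝ, (∃ B : ℝ, ∀ n : ℤ, |U n| ≤ B) ∧
          (∀ n : ℤ, 0 = d * (U (n + 1) + U (n - 1) - 2 * U n)
              + U n * (U n - μ) * (1 - U n)) ∧
          (∀ n : ℤ, |U n - VbarFun μ n| ≤ C * d) ∧
          Filter.Tendsto U Filter.atBot (nhds 0) ∧
          Filter.Tendsto U Filter.atTop (nhds 1) := by
  have hm : 0 < a * (1 - b) := mul_pos ha (by linarith)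
  refine ⟨(a * (1 - b)) ^ 2 / 300, by positivity, 16 / (a * (1 - b)), by positivity,
    fun d hd μ hμ => ?_⟩
  obtain ⟨hd0, hd1⟩ := hd
  obtain ⟨hμa, hμb⟩ := hμ
  have ha1 : a ≤ 1 := le_trans hab hb.le
  have H : Hyp μ d (a * (1 - b)) :=
    { hm := hm
      hmμ := by nlinarith
      hm1 := by nlinarith
      hmm := by nlinarith
      hd0 := hd0
      hd := hd1 }
  exact exists_solution H
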